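/- arXiv:2504.15572 — 3 statements merged into one kernel-verified Lean document; each statement's English description precedes it below -/
import Mathlib

section
/- Let φ(ξ,η) = |ξ|⁴ − |η|⁴ − |ξ−η|⁴ and P(ξ,η) = −η + ξ/5 for ξ, η ∈ ℝ⁵. Define Z(ξ,η) = φ(ξ,η) + P(ξ,η)·∂_η φ(ξ,η). Then Z(ξ,η) ≥ (1/2)(|η|⁴ + |ξ|⁴) for all ξ, η ∈ ℝ⁵. -/
noncomputable section

local notation "E" => EuclideanSpace ℝ (Fin 5)

/-- With `φ(ξ,η) = |ξ|⁴ − |η|⁴ − |ξ−η|⁴`, `P(ξ,η) = −η + ξ/5`, and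
`Z = φ + P · ∂_η φ` (where `∂_η φ = 4|ξ−η|²(ξ−η) − 4|η|²η`), one has
`Z(ξ,η) ≥ (1/2)(|η|⁴ + |ξ|⁴)`. -/
theorem Z_lower_bound (ξ η : E) :
    (1 / 2) * (‖η‖ ^ 4 + ‖ξ‖ ^ 4) ≤
      (‖ξ‖ ^ 4 - ‖η‖ ^ 4 - ‖ξ - η‖ ^ 4)
        + (inner ℝ (-η + (5 : ℝ)⁻¹ • ξ)
            ((4 * ‖ξ - η‖ ^ 2) • (ξ - η) - (4 * ‖η‖ ^ 2) • η) : ℝ) := by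
  have hη2 : ‖η‖ ^ 2 = (inner ℝ η η : ℝ) := (real_inner_self_eq_norm_sq η).symm
  have hξ2 : ‖ξ‖ ^ 2 = (inner ℝ ξ ξ : ℝ) := (real_inner_self_eq_norm_sq ξ).symm
  have hsub : ‖ξ - η‖ ^ 2 = (inner ℝ ξ ξ : ℝ) - 2 * inner ℝ η ξ + inner ℝ η η := by
    rw [← real_inner_self_eq_norm_sq, inner_sub_left, inner_sub_right,
      inner_sub_right, real_inner_comm ξ η]
    ring
  have hη4 : ‖η‖ ^ 4 = (inner ℝ η η : ℝ) ^ 2 := by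
    rw [show (4:ℕ) = 2*2 from rfl, pow_mul, hη2]
  have hξ4 : ‖ξ‖ ^ 4 = (inner ℝ ξ ξ : ℝ) ^ 2 := by
    rw [show (4:ℕ) = 2*2 from rfl, pow_mul, hξ2]
  have hsub4 : ‖ξ - η‖ ^ 4
      = ((inner ℝ ξ ξ : ℝ) - 2 * inner ℝ η ξ + inner ℝ η η) ^ 2 := by
    rw [show (4:ℕ) = 2*2 from rfl, pow_mul, hsub]
  have hinner : (inner ℝ (-η + (5 : ℝ)⁻¹ • ξ)
      ((4 * ‖ξ - η‖ ^ 2) • (ξ - η) - (4 * ‖η‖ ^ 2) • η) : ℝ)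
      = (4 * ((inner ℝ ξ ξ : ℝ) - 2 * inner ℝ η ξ + inner ℝ η η))
          * (((inner ℝ η η : ℝ) - inner ℝ η ξ)
            + (5:ℝ)⁻¹ * ((inner ℝ ξ ξ : ℝ) - inner ℝ η ξ))
        - (4 * (inner ℝ η η : ℝ)) * (-(inner ℝ η η : ℝ) + (5:ℝ)⁻¹ * inner ℝ η ξ) := by
    rw [hsub, hη2]
    simp only [inner_add_left, inner_sub_right, inner_smul_left, inner_smul_right,
      inner_neg_left, inner_sub_left, real_inner_comm ξ η,
      RCLike.inner_apply, conj_trivial]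
    ring
  rw [hη4, hξ4, hsub4, hinner]
  have hCS : (inner ℝ η ξ : ℝ) ^ 2 ≤ (inner ℝ η η : ℝ) * inner ℝ ξ ξ := by
    nlinarith [real_inner_mul_inner_self_le η ξ]
  have ha0 : (0:ℝ) ≤ inner ℝ η η := real_inner_self_nonneg
  have hb0 : (0:ℝ) ≤ inner ℝ ξ ξ := real_inner_self_nonneg
  nlinarith [sq_nonneg (28 * (inner ℝ η ξ : ℝ) - 24 * inner ℝ η η - 6 * inner ℝ ξ ξ),
    mul_nonneg ha0 hb0, sq_nonneg (inner ℝ η η : ℝ), sq_nonneg (inner ℝ ξ ξ : ℝ)]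
end
end

section
/- Let ψ(ξ,η,σ) = |ξ|⁴ − |ξ−η|⁴ − |η−σ|⁴ − |σ|⁴, Q(ξ,η,σ) = 2ξ − 3η, and S(ξ,η,σ) = ξ − 3σ, with ξ,η,σ ∈ ℝ⁵. Define Y = ψ + Q·∂_η ψ + S·∂_σ ψ. Then Y(ξ,η,σ) ≥ 4(|ξ−η|⁴ + |η−σ|⁴ + |σ|⁴) for all ξ,η,σ ∈ ℝ⁵. -/
noncomputable section

local notation "E" => EuclideanSpace ℝ (Fin 5)

private lemma Y_aux {F : Type*} [NormedAddCommGroup F] [InnerProductSpace ℝ F]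
    (a b c : F) :
    4 * (‖a‖ ^ 4 + ‖b‖ ^ 4 + ‖c‖ ^ 4) ≤
      (‖a + b + c‖ ^ 4 - ‖a‖ ^ 4 - ‖b‖ ^ 4 - ‖c‖ ^ 4)
        + (inner ℝ ((2 : ℝ) • a - b - c)
            ((4 * ‖a‖ ^ 2) • a - (4 * ‖b‖ ^ 2) • b) : ℝ)
        + (inner ℝ (a + b - (2 : ℝ) • c)
            ((4 * ‖b‖ ^ 2) • b - (4 * ‖c‖ ^ 2) • c) : ℝ) := by
  have key : ∀ t u : ℝ, 0 ≤ t → 0 ≤ u → 4*t^3*u ≤ 7*t^4 + 27/343*u^4 := by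
    intro t u ht hu
    have h1 : (0:ℝ) ≤ (3*u - 7*t)^2 * (3*u^2 + 14*t*u + 49*t^2) :=
      mul_nonneg (sq_nonneg _) (by positivity)
    nlinarith [h1]
  set s := a + b + c with hs
  have bound : ∀ v : F, 4*‖v‖^2*(inner ℝ v s : ℝ) ≤ 7*‖v‖^4 + 27/343*‖s‖^4 := by
    intro v
    calc 4*‖v‖^2*(inner ℝ v s : ℝ) ≤ 4*‖v‖^2*(‖v‖*‖s‖) := by
          have := real_inner_le_norm v s
          have h0 : (0:ℝ) ≤ 4*‖v‖^2 := by positivity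
          nlinarith [mul_le_mul_of_nonneg_left this h0]
      _ = 4*‖v‖^3*‖s‖ := by ring
      _ ≤ 7*‖v‖^4 + 27/343*‖s‖^4 := key _ _ (norm_nonneg _) (norm_nonneg _)
  have hA := bound a
  have hB := bound b
  have hC := bound c
  have haξ : (inner ℝ a s : ℝ) = ‖a‖^2 + inner ℝ a b + inner ℝ a c := by
    rw [hs]
    simp only [inner_add_right, real_inner_self_eq_norm_sq]
  have hbξ : (inner ℝ b s : ℝ) = inner ℝ a b + ‖b‖^2 + inner ℝ b c := by
    rw [hs, inner_add_right, inner_add_right, real_inner_self_eq_norm_sq,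
      real_inner_comm a b]
  have hcξ : (inner ℝ c s : ℝ) = inner ℝ a c + inner ℝ b c + ‖c‖^2 := by
    rw [hs, inner_add_right, inner_add_right, real_inner_self_eq_norm_sq,
      real_inner_comm a c, real_inner_comm b c]
  have hnξ : ‖s‖^2 = ‖a‖^2 + ‖b‖^2 + ‖c‖^2
      + 2*(inner ℝ a b : ℝ) + 2*(inner ℝ a c : ℝ) + 2*(inner ℝ b c : ℝ) := by
    rw [hs, ← real_inner_self_eq_norm_sq]
    simp only [inner_add_left, inner_add_right, real_inner_self_eq_norm_sq]
    rw [real_inner_comm a b, real_inner_comm a c, real_inner_comm b c]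
    ring
  have hpos : (0:ℝ) ≤ ‖s‖^4 := by positivity
  have h4 : ‖s‖^4 = (‖s‖^2)^2 := by ring
  rw [haξ] at hA; rw [hbξ] at hB; rw [hcξ] at hC
  rw [h4, hnξ] at hA hB hC hpos
  simp only [inner_add_left, inner_sub_left, inner_sub_right,
    real_inner_smul_left, real_inner_smul_right, real_inner_self_eq_norm_sq]
  rw [real_inner_comm a b, real_inner_comm a c, real_inner_comm b c, h4, hnξ]
  ring_nf
  ring_nf at hA hB hC hpos
  linarith [hA, hB, hC, hpos]

/-- For `ψ(ξ,η,σ) = |ξ|⁴ − |ξ−η|⁴ − |η−σ|⁴ − |σ|⁴`, `Q = 2ξ − 3η`, `S = ξ − 3σ`, the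
quantity `Y = ψ + Q·∂_η ψ + S·∂_σ ψ` satisfies `Y ≥ 4(|ξ−η|⁴ + |η−σ|⁴ + |σ|⁴)`. -/
theorem Y_lower_bound (ξ η σ : E) :
    4 * (‖ξ - η‖ ^ 4 + ‖η - σ‖ ^ 4 + ‖σ‖ ^ 4) ≤
      (‖ξ‖ ^ 4 - ‖ξ - η‖ ^ 4 - ‖η - σ‖ ^ 4 - ‖σ‖ ^ 4)
        + (inner ℝ ((2 : ℝ) • ξ - (3 : ℝ) • η)
            ((4 * ‖ξ - η‖ ^ 2) • (ξ - η) - (4 * ‖η - σ‖ ^ 2) • (η - σ)) : ℝ)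
        + (inner ℝ (ξ - (3 : ℝ) • σ)
            ((4 * ‖η - σ‖ ^ 2) • (η - σ) - (4 * ‖σ‖ ^ 2) • σ) : ℝ) := by
  have h := Y_aux (ξ - η) (η - σ) σ
  have e1 : ξ - η + (η - σ) + σ = ξ := by abel
  have e2 : (2:ℝ) • (ξ - η) - (η - σ) - σ = (2:ℝ) • ξ - (3:ℝ) • η := by module
  have e3 : ξ - η + (η - σ) - (2:ℝ) • σ = ξ - (3:ℝ) • σ := by module
  rw [e1, e2, e3] at h
  exact h
end
end

section
/- Let φ_ξ(η) = |η|⁴ + |ξ−η|⁴ on ℝ⁵. Then |∇_η φ_ξ(η)| ≳ |η − ξ/2| (|η|² + |ξ−η|²) for all η, ξ ∈ ℝ⁵, with an absolute constant. -/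
noncomputable section

local notation "E" => EuclideanSpace ℝ (Fin 5)

open scoped RealInnerProductSpace

/-- For `φ_ξ(η) = |η|⁴ + |ξ−η|⁴` with `∇_η φ_ξ(η) = 4|η|²η − 4|ξ−η|²(ξ−η)`, one has
`|∇_η φ_ξ(η)| ≳ |η − ξ/2| (|η|² + |ξ−η|²)` with an absolute constant. -/
theorem bilinear_phase_gradient_lower_bound :
    ∃ c : ℝ, 0 < c ∧ ∀ (ξ η : E),
      c * ‖η - (2 : ℝ)⁻¹ • ξ‖ * (‖η‖ ^ 2 + ‖ξ - η‖ ^ 2) ≤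
        ‖(4 * ‖η‖ ^ 2) • η - (4 * ‖ξ - η‖ ^ 2) • (ξ - η)‖ := by
  refine ⟨1, one_pos, fun ξ η => ?_⟩
  set G : E := (4 * ‖η‖ ^ 2) • η - (4 * ‖ξ - η‖ ^ 2) • (ξ - η) with hG
  set d : E := η - (ξ - η) with hd
  have hdecomp : η - (2 : ℝ)⁻¹ • ξ = (2 : ℝ)⁻¹ • d := by
    rw [hd]; module
  have hnorm : ‖η - (2 : ℝ)⁻¹ • ξ‖ = (2 : ℝ)⁻¹ * ‖d‖ := by
    rw [hdecomp, norm_smul]; norm_num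
  have hds : ‖d‖ ^ 2 = ‖η‖ ^ 2 - 2 * ⟪η, ξ - η⟫ + ‖ξ - η‖ ^ 2 := by
    rw [hd]; exact norm_sub_sq_real η (ξ - η)
  have hinner : ⟪G, d⟫ =
      2 * ‖d‖ ^ 2 * (‖η‖ ^ 2 + ‖ξ - η‖ ^ 2) + 2 * (‖η‖ ^ 2 - ‖ξ - η‖ ^ 2) ^ 2 := by
    rw [hG, hd, hds]
    generalize ξ - η = v
    simp only [inner_sub_left, inner_sub_right, real_inner_smul_left,
      real_inner_self_eq_norm_sq, real_inner_comm v η]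
    ring
  have hCS : ⟪G, d⟫ ≤ ‖G‖ * ‖d‖ := real_inner_le_norm G d
  have hkey : 2 * ‖d‖ ^ 2 * (‖η‖ ^ 2 + ‖ξ - η‖ ^ 2) ≤ ‖G‖ * ‖d‖ := by
    nlinarith [sq_nonneg (‖η‖ ^ 2 - ‖ξ - η‖ ^ 2)]
  rw [hnorm]
  have hS : (0 : ℝ) ≤ ‖η‖ ^ 2 + ‖ξ - η‖ ^ 2 := by positivity
  nlinarith [norm_nonneg d, norm_nonneg G, mul_nonneg (norm_nonneg d) hS,
    mul_nonneg (mul_nonneg (norm_nonneg d) (norm_nonneg d)) hS]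
end
end
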